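/- Let A = {a1 < a2 < ...} and B = {b1 < b2 < ...} be two infinite sequences of positive integers with b1 > 1 such that P(A) = ℕ \ B, and let k be the index with a_k < b1 < a_{k+1}. Then P({a1, ..., a_i}) = [0, c_i] for i = 1, 2, ..., k, where c_1 = 1, c_2 = 3, c_{i+1} = c_i + a_{i+1} for 1 ≤ i ≤ k−1, c_k = b1 − 1, and c_i + 1 ≥ a_{i+1} for 1 ≤ i ≤ k−1. -/

import Mathlib

/-- The set of all finite subset sums of a set of positive integers
(finite sums of distinct elements; the empty sum 0 is included). -/
def subsetSums (S : Set ℕ) : Set ℕ :=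
  {n | ∃ F : Finset ℕ, ↑F ⊆ S ∧ ∑ x ∈ F, x = n}

lemma subsetSums_mono {S T : Set ℕ} (h : S ⊆ T) : subsetSums S ⊆ subsetSums T := by
  rintro n ⟨F, hF, hsum⟩
  exact ⟨F, hF.trans h, hsum⟩

/-- Structure of the subset sums of the initial segments of `A` below `b₁`.
Here `a i`, `b i` are the `(i+1)`-st elements of `A`, `B`, so the first `i`
elements of `A` are `a '' Set.Iio i`. -/
theorem stmt2 (a b : ℕ → ℕ) (ha : StrictMono a) (hapos : ∀ i, 0 < a i)
    (hb : StrictMono b) (hb1 : 1 < b 0)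
    (hPA : subsetSums (Set.range a) = Set.univ \ Set.range b)
    (k : ℕ) (hk1 : a k < b 0) (hk2 : b 0 < a (k + 1)) :
    ∃ c : ℕ → ℕ, c 0 = 1 ∧ c 1 = 3 ∧
      (∀ i, i < k → c (i + 1) = c i + a (i + 1)) ∧
      c k = b 0 - 1 ∧
      (∀ i, i < k → a (i + 1) ≤ c i + 1) ∧
      (∀ i, i ≤ k → subsetSums (a '' Set.Iio (i + 1)) = Set.Icc 0 (c i)) := by
  set S : ℕ → ℕ := fun i => ∑ j ∈ Finset.range (i + 1), a j with hSdef
  have hSsucc : ∀ i, S (i + 1) = S i + a (i + 1) := by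
    intro i
    simp only [hSdef]
    rw [Finset.sum_range_succ]
  -- anything below b 0 is in P(A)
  have hmem : ∀ n, n < b 0 → n ∈ subsetSums (Set.range a) := by
    intro n hn
    rw [hPA]
    refine ⟨trivial, ?_⟩
    rintro ⟨j, rfl⟩
    exact absurd (hb.monotone (Nat.zero_le j)) (by omega)
  -- nothing in P(A) is in range b
  have hnotB : ∀ n, n ∈ subsetSums (Set.range a) → n ∉ Set.range b := by
    intro n hn
    rw [hPA] at hn
    exact hn.2
  -- a 0 = 1
  have ha0 : a 0 = 1 := by
    obtain ⟨F, hF, hsum⟩ := hmem 1 hb1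
    have hne : F.Nonempty := by
      rcases F.eq_empty_or_nonempty with h | h
      · subst h; simp at hsum
      · exact h
    obtain ⟨x, hx⟩ := hne
    have hxle : x ≤ 1 := by
      calc x = id x := rfl
      _ ≤ ∑ y ∈ F, y := Finset.single_le_sum (fun _ _ => Nat.zero_le _) hx
      _ = 1 := hsum
    obtain ⟨j, hj⟩ := hF hx
    have := hapos j
    have ha0le : a 0 ≤ a j := ha.monotone (Nat.zero_le j)
    have := hapos 0
    omega
  -- a representation of small n only uses small elements
  have hrep_bound : ∀ i n, n < a (i + 1) → n ∈ subsetSums (Set.range a) →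
      n ∈ subsetSums (a '' Set.Iio (i + 1)) := by
    rintro i n hlt ⟨F, hF, hsum⟩
    refine ⟨F, ?_, hsum⟩
    intro x hx
    obtain ⟨j, hj⟩ := hF hx
    have hxle : x ≤ n := by
      calc x = id x := rfl
      _ ≤ ∑ y ∈ F, y := Finset.single_le_sum (fun _ _ => Nat.zero_le _) hx
      _ = n := hsum
    have hji : j < i + 1 := by
      by_contra hc
      have : a (i + 1) ≤ a j := ha.monotone (by omega)
      omega
    exact ⟨j, hji, hj⟩
  -- if the equality holds at i ≤ k, then S i < b 0
  have hSlt : ∀ i, subsetSums (a '' Set.Iio (i + 1)) = Set.Icc 0 (S i) → S i < b 0 := by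
    intro i heq
    by_contra h
    push_neg at h
    have hb0 : b 0 ∈ subsetSums (a '' Set.Iio (i + 1)) := by
      rw [heq]; exact ⟨Nat.zero_le _, h⟩
    have : b 0 ∈ subsetSums (Set.range a) :=
      subsetSums_mono (by rintro x ⟨j, _, rfl⟩; exact ⟨j, rfl⟩) hb0
    exact hnotB _ this ⟨0, rfl⟩
  -- next element bound
  have hanext : ∀ i, i < k → subsetSums (a '' Set.Iio (i + 1)) = Set.Icc 0 (S i) →
      a (i + 1) ≤ S i + 1 := by
    intro i hik heq
    by_contra h
    push_neg at h
    have hak : a (i + 1) ≤ a k := ha.monotone (by omega)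
    have h1 : S i + 1 < b 0 := by omega
    have hmem' := hrep_bound i (S i + 1) (by omega) (hmem _ h1)
    rw [heq] at hmem'
    have := hmem'.2
    omega
  -- step lemma
  have hstep : ∀ i, subsetSums (a '' Set.Iio (i + 1)) = Set.Icc 0 (S i) →
      a (i + 1) ≤ S i + 1 →
      subsetSums (a '' Set.Iio (i + 2)) = Set.Icc 0 (S (i + 1)) := by
    intro i heq hle
    ext n
    simp only [Set.mem_Icc]
    constructor
    · rintro ⟨F, hF, rfl⟩
      refine ⟨Nat.zero_le _, ?_⟩
      rw [hSsucc]
      by_cases hm : a (i + 1) ∈ F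
      · rw [← Finset.add_sum_erase _ _ hm]
        have hsub : ↑(F.erase (a (i + 1))) ⊆ a '' Set.Iio (i + 1) := by
          intro x hx
          have hx' : x ∈ F.erase (a (i + 1)) := hx
          have hxF : x ∈ F := Finset.mem_of_mem_erase hx'
          have hxne : x ≠ a (i + 1) := Finset.ne_of_mem_erase hx'
          obtain ⟨j, hj, hje⟩ := hF hxF
          have : j ≠ i + 1 := by rintro rfl; exact hxne hje.symm
          exact ⟨j, by simp only [Set.mem_Iio] at hj ⊢; omega, hje⟩
        have : (∑ x ∈ F.erase (a (i + 1)), x) ∈ Set.Icc 0 (S i) := by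
          rw [← heq]; exact ⟨_, hsub, rfl⟩
        have := this.2
        omega
      · have hsub : ↑F ⊆ a '' Set.Iio (i + 1) := by
          intro x hx
          obtain ⟨j, hj, hje⟩ := hF hx
          have : j ≠ i + 1 := by
            rintro rfl
            exact hm (hje ▸ hx)
          exact ⟨j, by simp only [Set.mem_Iio] at hj ⊢; omega, hje⟩
        have : (∑ x ∈ F, x) ∈ Set.Icc 0 (S i) := by
          rw [← heq]; exact ⟨_, hsub, rfl⟩
        have := this.2
        omega
    · rintro ⟨-, hn⟩
      rw [hSsucc] at hn
      by_cases hns : n ≤ S i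
      · have : n ∈ subsetSums (a '' Set.Iio (i + 1)) := by
          rw [heq]; exact ⟨Nat.zero_le _, hns⟩
        exact subsetSums_mono
          (Set.image_mono (fun x hx => by simp only [Set.mem_Iio] at hx ⊢; omega)) this
      · push_neg at hns
        have hge : a (i + 1) ≤ n := by omega
        have hsub : n - a (i + 1) ∈ subsetSums (a '' Set.Iio (i + 1)) := by
          rw [heq]; exact ⟨Nat.zero_le _, by omega⟩
        obtain ⟨F, hF, hsum⟩ := hsub
        have hnotin : a (i + 1) ∉ F := by
          intro hmem'
          obtain ⟨j, hj, hje⟩ := hF hmem'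
          have := ha.injective hje
          simp only [Set.mem_Iio] at hj
          omega
        refine ⟨insert (a (i + 1)) F, ?_, ?_⟩
        · rw [Finset.coe_insert]
          intro x hx
          rcases hx with rfl | hx
          · exact ⟨i + 1, by simp, rfl⟩
          · obtain ⟨j, hj, hje⟩ := hF hx
            exact ⟨j, by simp only [Set.mem_Iio] at hj ⊢; omega, hje⟩
        · rw [Finset.sum_insert hnotin, hsum]
          omega
  -- base case
  have hbase : subsetSums (a '' Set.Iio 1) = Set.Icc 0 (S 0) := by
    have hS0 : S 0 = 1 := by simp [hSdef, ha0]
    have himg : a '' Set.Iio 1 = {1} := by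
      ext x
      simp only [Set.mem_image, Set.mem_Iio, Set.mem_singleton_iff]
      constructor
      · rintro ⟨j, hj, rfl⟩
        have : j = 0 := by omega
        subst this; exact ha0
      · rintro rfl
        exact ⟨0, by omega, ha0⟩
    rw [himg, hS0]
    ext n
    simp only [Set.mem_Icc]
    constructor
    · rintro ⟨F, hF, rfl⟩
      have hsub : F ⊆ ({1} : Finset ℕ) := by
        intro x hx
        exact Finset.mem_singleton.2 (hF hx)
      rcases Finset.subset_singleton_iff.1 hsub with rfl | rfl <;> simp
    · rintro ⟨-, hn⟩
      interval_cases n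
      · exact ⟨∅, by simp, by simp⟩
      · exact ⟨{1}, by simp, by simp⟩
  -- main induction
  have key : ∀ i, i ≤ k → subsetSums (a '' Set.Iio (i + 1)) = Set.Icc 0 (S i) := by
    intro i
    induction i with
    | zero => intro _; exact hbase
    | succ i ih =>
      intro h
      have heq := ih (by omega)
      exact hstep i heq (hanext i (by omega) heq)
  -- value of S k
  have hSk : S k = b 0 - 1 := by
    have heqk := key k le_rfl
    have h1 : S k < b 0 := hSlt k heqk
    have h2 : b 0 ≤ S k + 1 := by
      by_contra h
      push_neg at h
      have hmem' := hrep_bound k (S k + 1) (by omega) (hmem _ h)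
      rw [heqk] at hmem'
      have := hmem'.2
      omega
    omega
  -- assemble
  refine ⟨fun i => if i ≤ k then S i else if i = 1 then 3 else 0, ?_, ?_, ?_, ?_, ?_, ?_⟩
  · simp only [Nat.zero_le, if_pos]
    simp [hSdef, ha0]
  · by_cases h1k : 1 ≤ k
    · simp only [h1k, if_pos]
      have ha1 : a 1 = 2 := by
        have h := hanext 0 (by omega) (key 0 (by omega))
        have hS0 : S 0 = 1 := by simp [hSdef, ha0]
        have := ha (show (0:ℕ) < 1 by omega)
        have hx : a (0 + 1) = a 1 := by norm_num
        have hS0 : S 0 = 1 := by simp [hSdef, ha0]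
        omega
      rw [hSsucc]
      have hS0 : S 0 = 1 := by simp [hSdef, ha0]
      have hx : a (0 + 1) = a 1 := by norm_num
      omega
    · have : k = 0 := by omega
      subst this
      norm_num
  · intro i hik
    have h1 : i + 1 ≤ k := by omega
    have h2 : i ≤ k := by omega
    simp only [h1, h2, if_pos]
    exact hSsucc i
  · simp only [le_rfl, if_pos]
    exact hSk
  · intro i hik
    have h2 : i ≤ k := by omega
    simp only [h2, if_pos]
    exact hanext i hik (key i h2)
  · intro i hik
    simp only [hik, if_pos]
    exact key i hik
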